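/- Let φ(x) = x + ψ(x) where ψ: R^d → R^d is differentiable and its Jacobian J_ψ(x) has only nonnegative real eigenvalues and satisfies J_φ(x)^T J_φ(x) - I ⪰ 0 for all x. Then φ is an expansion: ‖φ(x) - φ(x')‖ ≥ ‖x - x'‖ for all x, x'. -/

import Mathlib

open Metric Set Finset

section StrongDispersiveAux

variable {d : ℕ}

local notation "E" => EuclideanSpace ℝ (Fin d)

/-- Uniform local inverse / expansion data on a compact ball. -/
lemma uniform_good (φ : E → E) (hφC : ContDiff ℝ 1 φ)
    (hD : ∀ x v, ‖v‖ ≤ ‖fderiv ℝ φ x v‖) (a : E) (R : ℝ) {ε : ℝ} (hε : 0 < ε) (hε1 : ε < 1) :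
    ∃ δ : ℝ, 0 < δ ∧ ∀ z ∈ closedBall a R,
      (∀ u ∈ closedBall z δ, ∀ v ∈ closedBall z δ,
        (1 - ε) * ‖u - v‖ ≤ ‖φ u - φ v‖) ∧
      (∀ y ∈ closedBall (φ z) ((1 - ε) * δ), ∃ w ∈ closedBall z δ, φ w = y) := by
  have hdiff : Differentiable ℝ φ := hφC.differentiable one_ne_zero
  have hc : Continuous (fderiv ℝ φ) := hφC.continuous_fderiv one_ne_zero
  -- uniform continuity of fderiv on a big closed ball
  have hK : IsCompact (closedBall a (R + 1)) := isCompact_closedBall _ _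
  have huc : UniformContinuousOn (fderiv ℝ φ) (closedBall a (R + 1)) :=
    hK.uniformContinuousOn_of_continuous hc.continuousOn
  rw [Metric.uniformContinuousOn_iff] at huc
  obtain ⟨δ₁, hδ₁, hucc⟩ := huc ε hε
  refine ⟨min (δ₁ / 2) (1 / 2), by positivity, fun z hz => ?_⟩
  set δ := min (δ₁ / 2) (1 / 2) with hδdef
  have hδpos : 0 < δ := by positivity
  have hδ1 : δ ≤ 1 / 2 := min_le_right _ _
  have hball : closedBall z δ ⊆ closedBall a (R + 1) := by
    intro w hw
    have h1 : dist w z ≤ δ := mem_closedBall.1 hw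
    have h2 : dist z a ≤ R := mem_closedBall.1 hz
    have := dist_triangle w z a
    exact mem_closedBall.2 (by linarith [hδ1])
  set A := fderiv ℝ φ z with hA
  -- approximation
  have happrox : ∀ u ∈ closedBall z δ, ∀ v ∈ closedBall z δ,
      ‖φ u - φ v - A (u - v)‖ ≤ ε * ‖u - v‖ := by
    intro u hu v hv
    have hconv : Convex ℝ (closedBall z δ) := convex_closedBall _ _
    have hder : ∀ w ∈ closedBall z δ,
        HasFDerivWithinAt (fun w => φ w - A w) (fderiv ℝ φ w - A) (closedBall z δ) w := by
      intro w hw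
      exact ((hdiff w).hasFDerivAt.sub (A.hasFDerivAt)).hasFDerivWithinAt
    have hbd : ∀ w ∈ closedBall z δ, ‖fderiv ℝ φ w - A‖ ≤ ε := by
      intro w hw
      have hwK : w ∈ closedBall a (R + 1) := hball hw
      have hzK : z ∈ closedBall a (R + 1) := by
        have h2 : dist z a ≤ R := mem_closedBall.1 hz
        exact mem_closedBall.2 (by linarith)
      have hdist : dist w z < δ₁ := by
        have h1 : dist w z ≤ δ := mem_closedBall.1 hw
        have : δ ≤ δ₁ / 2 := min_le_left _ _
        linarith
      have := hucc w hwK z hzK hdist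
      rw [dist_eq_norm] at this
      exact this.le
    have h := hconv.norm_image_sub_le_of_norm_hasFDerivWithin_le hder hbd hv hu
    have heq : φ u - φ v - A (u - v) = (fun w => φ w - A w) u - (fun w => φ w - A w) v := by
      simp only [map_sub]; abel
    rw [heq]; exact h
  constructor
  · intro u hu v hv
    have h1 := happrox u hu v hv
    have h2 : ‖u - v‖ ≤ ‖A (u - v)‖ := hD z (u - v)
    have h3 : ‖A (u - v)‖ - ‖φ u - φ v‖ ≤ ‖φ u - φ v - A (u - v)‖ := by
      have h4 := norm_sub_norm_le (A (u - v)) (φ u - φ v)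
      have h5 : ‖A (u - v) - (φ u - φ v)‖ = ‖φ u - φ v - A (u - v)‖ := norm_sub_rev _ _
      linarith
    nlinarith [norm_nonneg (u - v)]
  · -- surjectivity
    intro y hy
    -- build nonlinear right inverse of A
    have hinj : Function.Injective A := by
      intro v w h
      have := hD z (v - w)
      rw [map_sub, h, sub_self, norm_zero] at this
      have : v - w = 0 := norm_le_zero_iff.1 this
      exact sub_eq_zero.1 this
    have hsurj : Function.Surjective A := by
      have h : Function.Injective (A : E →ₗ[ℝ] E) := hinj
      exact LinearMap.injective_iff_surjective.1 h
    set nri : A.NonlinearRightInverse :=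
      { toFun := fun y => (hsurj y).choose
        nnnorm := 1
        bound' := fun y => by
          have h1 := hD z ((hsurj y).choose)
          rw [show fderiv ℝ φ z ((hsurj y).choose) = y from (hsurj y).choose_spec] at h1
          simpa using h1
        right_inv' := fun y => (hsurj y).choose_spec } with hnri
    have happ : ApproximatesLinearOn φ A (closedBall z δ) ε.toNNReal := by
      intro u hu v hv
      have := happrox u hu v hv
      rwa [Real.coe_toNNReal _ hε.le]
    have hsur := happ.surjOn_closedBall_of_nonlinearRightInverse nri hδpos.le (subset_refl _)
    have hrad : (1 - ε) * δ ≤ (((nri.nnnorm : ℝ))⁻¹ - (ε.toNNReal : ℝ)) * δ := by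
      have h1 : (nri.nnnorm : ℝ) = 1 := by norm_num [hnri]
      rw [h1, Real.coe_toNNReal _ hε.le]; norm_num
    obtain ⟨w, hw, hwy⟩ := hsur (closedBall_subset_closedBall hrad hy)
    exact ⟨w, hw, hwy⟩

/-- Chain predicate: a discrete lift of the finite path `q` starting at `a`. -/
def ChainP (φ : E → E) (a : E) (q : ℕ → E) (n : ℕ) (C : ℝ) (z : ℕ → E) : Prop :=
  z 0 = a ∧ ∀ i < n, φ (z (i + 1)) = q (i + 1) ∧ ‖z (i + 1) - z i‖ ≤ C * ‖q (i + 1) - q i‖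

lemma chain_phi {φ : E → E} {a : E} {q : ℕ → E} {n : ℕ} {C : ℝ} {z : ℕ → E}
    (hz : ChainP φ a q n C z) (hq0 : q 0 = φ a) : ∀ i ≤ n, φ (z i) = q i := by
  intro i hi
  cases i with
  | zero => rw [hz.1, hq0]
  | succ i => exact (hz.2 i (by omega)).1

lemma chain_norm_le {φ : E → E} {a : E} {q : ℕ → E} {n : ℕ} {C : ℝ} {z : ℕ → E}
    (hz : ChainP φ a q n C z) (hC : 0 ≤ C) :
    ∀ i ≤ n, ‖z i - a‖ ≤ C * ∑ j ∈ Finset.range n, ‖q (j + 1) - q j‖ := by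
  intro i hi
  have h1 : dist (z 0) (z i) ≤ ∑ j ∈ Finset.range i, dist (z j) (z (j + 1)) :=
    dist_le_range_sum_dist z i
  have h2 : ∑ j ∈ Finset.range i, dist (z j) (z (j + 1))
      ≤ ∑ j ∈ Finset.range i, C * ‖q (j + 1) - q j‖ := by
    apply Finset.sum_le_sum
    intro j hj
    rw [dist_eq_norm, norm_sub_rev]
    exact (hz.2 j (lt_of_lt_of_le (Finset.mem_range.1 hj) hi)).2
  have h3 : ∑ j ∈ Finset.range i, C * ‖q (j + 1) - q j‖
      ≤ ∑ j ∈ Finset.range n, C * ‖q (j + 1) - q j‖ := by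
    apply Finset.sum_le_sum_of_subset_of_nonneg
    · exact Finset.range_subset_range.2 hi
    · intro j _ _
      positivity
  rw [← Finset.mul_sum] at h2 h3
  rw [← Finset.mul_sum] at h3
  have h4 : ‖z i - a‖ = dist (z 0) (z i) := by rw [hz.1, dist_eq_norm, norm_sub_rev]
  linarith

/-- The goodness property produced by `uniform_good`. -/
def Good (φ : E → E) (a : E) (R δ ε : ℝ) : Prop :=
  ∀ z ∈ closedBall a R,
    (∀ u ∈ closedBall z δ, ∀ v ∈ closedBall z δ, (1 - ε) * ‖u - v‖ ≤ ‖φ u - φ v‖) ∧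
    (∀ y ∈ closedBall (φ z) ((1 - ε) * δ), ∃ w ∈ closedBall z δ, φ w = y)

lemma chain_exists {φ : E → E} {a : E} {R δ ε : ℝ} (hG : Good φ a R δ ε)
    (hδ : 0 < δ) (hε : 0 < ε) (hε2 : ε ≤ 1 / 2) {S : ℝ} (hSR : 2 * S ≤ R)
    (n : ℕ) (q : ℕ → E) (hq0 : q 0 = φ a)
    (hstep : ∀ i < n, ‖q (i + 1) - q i‖ ≤ (1 - ε) * δ)
    (htot : ∑ i ∈ Finset.range n, ‖q (i + 1) - q i‖ ≤ S) :
    ∃ z, ChainP φ a q n (1 - ε)⁻¹ z := by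
  have h1ε : (0 : ℝ) < 1 - ε := by linarith
  have h2ε : (1 - ε)⁻¹ ≤ 2 := by
    rw [inv_le_comm₀ h1ε (by norm_num)]; linarith
  have key : ∀ m, m ≤ n → ∃ z, ChainP φ a q m (1 - ε)⁻¹ z := by
    intro m
    induction m with
    | zero => exact fun _ => ⟨fun _ => a, rfl, fun i hi => absurd hi (Nat.not_lt_zero i)⟩
    | succ m ih =>
      intro hm
      obtain ⟨z, hz⟩ := ih (by omega)
      have hφm : φ (z m) = q m := chain_phi hz hq0 m le_rfl
      have hmem : z m ∈ closedBall a R := by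
        have h1 := chain_norm_le hz (by positivity) m le_rfl
        have h2 : ∑ j ∈ Finset.range m, ‖q (j + 1) - q j‖
            ≤ ∑ j ∈ Finset.range n, ‖q (j + 1) - q j‖ := by
          apply Finset.sum_le_sum_of_subset_of_nonneg (Finset.range_subset_range.2 (by omega))
          intro j _ _; positivity
        have h3 : (1 - ε)⁻¹ * ∑ j ∈ Finset.range m, ‖q (j + 1) - q j‖ ≤ 2 * S := by
          have h4 : (0:ℝ) ≤ ∑ j ∈ Finset.range m, ‖q (j + 1) - q j‖ := by positivity
          nlinarith
        rw [mem_closedBall, dist_eq_norm]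
        linarith
      obtain ⟨hanti, hsurj⟩ := hG (z m) hmem
      have hy : q (m + 1) ∈ closedBall (φ (z m)) ((1 - ε) * δ) := by
        rw [hφm, mem_closedBall, dist_eq_norm]
        exact hstep m (by omega)
      obtain ⟨w, hw, hwq⟩ := hsurj _ hy
      have hd := hanti w hw (z m) (mem_closedBall_self hδ.le)
      rw [hwq, hφm] at hd
      have hstep' : ‖w - z m‖ ≤ (1 - ε)⁻¹ * ‖q (m + 1) - q m‖ :=
        calc ‖w - z m‖ = (1 - ε)⁻¹ * ((1 - ε) * ‖w - z m‖) := by field_simp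
          _ ≤ (1 - ε)⁻¹ * ‖q (m + 1) - q m‖ :=
            mul_le_mul_of_nonneg_left hd (by positivity)
      refine ⟨fun j => if j = m + 1 then w else z j, ?_, fun i hi => ?_⟩
      · simp [hz.1]
      · rcases Nat.lt_succ_iff_lt_or_eq.1 hi with h | h
        · have e1 : i + 1 ≠ m + 1 := by omega
          have e2 : i ≠ m + 1 := by omega
          simp only [e1, e2, if_false]
          exact hz.2 i h
        · subst h
          have e2 : i ≠ i + 1 := by omega
          simp only [if_pos rfl, e2, if_false]
          exact ⟨hwq, hstep'⟩
  exact key n le_rfl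

lemma chain_close {φ : E → E} {a : E} {R δ ε : ℝ} (hG : Good φ a R δ ε)
    (hδ : 0 < δ) (hε : 0 < ε) (hε2 : ε ≤ 1 / 2) {S : ℝ} (hSR : 2 * S ≤ R)
    {n : ℕ} {q q' : ℕ → E} {z z' : ℕ → E}
    (hq0 : q 0 = φ a) (hq'0 : q' 0 = φ a)
    (hstep : ∀ i < n, ‖q (i + 1) - q i‖ ≤ δ / 16)
    (hstep' : ∀ i < n, ‖q' (i + 1) - q' i‖ ≤ δ / 16)
    (htot : ∑ i ∈ Finset.range n, ‖q (i + 1) - q i‖ ≤ S)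
    (hz : ChainP φ a q n (1 - ε)⁻¹ z) (hz' : ChainP φ a q' n (1 - ε)⁻¹ z')
    (hqq' : ∀ i ≤ n, ‖q i - q' i‖ ≤ δ / 8) :
    ∀ i ≤ n, ‖z i - z' i‖ ≤ (1 - ε)⁻¹ * ‖q i - q' i‖ := by
  have h1ε : (0 : ℝ) < 1 - ε := by linarith
  have h2ε : (1 - ε)⁻¹ ≤ 2 := by
    rw [inv_le_comm₀ h1ε (by norm_num)]; linarith
  have h0ε : (0 : ℝ) ≤ (1 - ε)⁻¹ := by positivity
  intro i
  induction i with
  | zero =>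
    intro _
    rw [hz.1, hz'.1, sub_self, norm_zero]
    positivity
  | succ i ih =>
    intro hi
    have hin : i < n := by omega
    have IH := ih (by omega)
    have IHb : ‖z i - z' i‖ ≤ δ / 4 := by
      have := hqq' i (by omega)
      nlinarith
    have h1 : ‖z (i + 1) - z i‖ ≤ δ / 8 := by
      have := (hz.2 i hin).2
      have := hstep i hin
      nlinarith
    have h2 : ‖z' (i + 1) - z' i‖ ≤ δ / 8 := by
      have := (hz'.2 i hin).2
      have := hstep' i hin
      nlinarith
    have hcc : ‖z' (i + 1) - z (i + 1)‖ ≤ δ := by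
      have t1 : ‖z' (i + 1) - z (i + 1)‖
          ≤ ‖z' (i + 1) - z' i‖ + ‖z' i - z i‖ + ‖z i - z (i + 1)‖ := by
        have := norm_sub_le_norm_sub_add_norm_sub (z' (i+1)) (z' i) (z (i+1))
        have := norm_sub_le_norm_sub_add_norm_sub (z' i) (z i) (z (i+1))
        linarith
      have t2 : ‖z' i - z i‖ = ‖z i - z' i‖ := norm_sub_rev _ _
      have t3 : ‖z i - z (i + 1)‖ = ‖z (i + 1) - z i‖ := norm_sub_rev _ _
      rw [t2, t3] at t1
      linarith
    have hmem : z (i + 1) ∈ closedBall a R := by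
      have hb := chain_norm_le hz h0ε (i + 1) hi
      have h3 : (1 - ε)⁻¹ * ∑ j ∈ Finset.range n, ‖q (j + 1) - q j‖ ≤ 2 * S := by
        have h4 : (0:ℝ) ≤ ∑ j ∈ Finset.range n, ‖q (j + 1) - q j‖ := by positivity
        nlinarith
      rw [mem_closedBall, dist_eq_norm]
      linarith
    obtain ⟨hanti, _⟩ := hG (z (i + 1)) hmem
    have hd := hanti (z (i + 1)) (mem_closedBall_self hδ.le) (z' (i + 1))
      (by rw [mem_closedBall, dist_eq_norm]; exact hcc)
    rw [chain_phi hz hq0 (i + 1) hi, chain_phi hz' hq'0 (i + 1) hi] at hd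
    calc ‖z (i + 1) - z' (i + 1)‖
        = (1 - ε)⁻¹ * ((1 - ε) * ‖z (i + 1) - z' (i + 1)‖) := by field_simp
      _ ≤ (1 - ε)⁻¹ * ‖q (i + 1) - q' (i + 1)‖ :=
          mul_le_mul_of_nonneg_left hd (by positivity)

set_option maxHeartbeats 2000000 in
lemma phi_injective (φ : E → E) (hφC : ContDiff ℝ 1 φ)
    (hD : ∀ x v, ‖v‖ ≤ ‖fderiv ℝ φ x v‖) : Function.Injective φ := by
  intro a b hab
  have hdiff : Differentiable ℝ φ := hφC.differentiable one_ne_zero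
  set u := b - a with hu
  set y := φ a with hy
  -- Lipschitz bound on the ball B₀ = closedBall a ‖u‖
  obtain ⟨M, hM⟩ : ∃ M, ∀ w ∈ closedBall a ‖u‖, ‖fderiv ℝ φ w‖ ≤ M :=
    (isCompact_closedBall a ‖u‖).exists_bound_of_continuousOn
      (hφC.continuous_fderiv one_ne_zero).continuousOn
  set M' := max M 0 + 1 with hM'
  have hM'1 : 1 ≤ M' := by
    have := le_max_right M 0; simp only [hM']; linarith
  have hM'0 : 0 < M' := by linarith
  have hLip : ∀ w ∈ closedBall a ‖u‖, ∀ w' ∈ closedBall a ‖u‖,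
      ‖φ w - φ w'‖ ≤ M' * ‖w - w'‖ := by
    intro w hw w' hw'
    refine (convex_closedBall a ‖u‖).norm_image_sub_le_of_norm_hasFDerivWithin_le
      (fun x hx => (hdiff x).hasFDerivAt.hasFDerivWithinAt) ?_ hw' hw
    intro x hx
    have := hM x hx
    have := le_max_left M 0
    simp only [hM']; linarith
  set S := M' * ‖u‖ with hS
  have hS0 : 0 ≤ S := by positivity
  have huS : ‖u‖ ≤ S := by nlinarith [norm_nonneg u]
  set R := 2 * S with hR
  obtain ⟨δ, hδ, hGood⟩ := uniform_good φ hφC hD a R (ε := 1/2) (by norm_num) (by norm_num)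
  have hG : Good φ a R δ (1/2) := hGood
  obtain ⟨n, hn0, hkey⟩ : ∃ n : ℕ, 0 < n ∧ S + ‖u‖ ≤ (n : ℝ) * (δ / 16) := by
    obtain ⟨n, hn⟩ := exists_nat_ge (16 * (S + ‖u‖) / δ)
    refine ⟨n + 1, Nat.succ_pos n, ?_⟩
    rw [div_le_iff₀ hδ] at hn
    have hcn : (0:ℝ) ≤ (n : ℝ) := Nat.cast_nonneg n
    push_cast
    nlinarith
  set ν := (n : ℝ) with hν
  have hν0 : 0 < ν := by rw [hν]; exact_mod_cast hn0
  have hSν : S / ν ≤ δ / 16 := by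
    rw [div_le_iff₀ hν0]
    nlinarith [norm_nonneg u]
  have huν : ‖u‖ / ν ≤ δ / 16 := by
    rw [div_le_iff₀ hν0]
    nlinarith
  -- the segment and its image
  set γ : ℕ → E := fun i => a + ((i : ℝ) / ν) • u with hγ
  set p : ℕ → E := fun i => φ (γ i) with hp
  have hγdiff : ∀ i j : ℕ, γ i - γ j = (((i : ℝ) - (j : ℝ)) / ν) • u := by
    intro i j
    simp only [hγ]
    rw [sub_div, sub_smul]
    abel
  have hγmem : ∀ i ≤ n, γ i ∈ closedBall a ‖u‖ := by
    intro i hi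
    rw [mem_closedBall, dist_eq_norm]
    have : γ i - a = ((i : ℝ) / ν) • u := by simp [hγ]
    rw [this, norm_smul, Real.norm_eq_abs, abs_of_nonneg (by positivity)]
    have h1 : (i : ℝ) / ν ≤ 1 := by
      rw [div_le_one hν0]
      exact_mod_cast Nat.cast_le.2 hi
    nlinarith [norm_nonneg u]
  have hγmemR : ∀ i ≤ n, γ i ∈ closedBall a R := fun i hi =>
    closedBall_subset_closedBall (by simp only [hR]; linarith) (hγmem i hi)
  have hγstep : ∀ i : ℕ, ‖γ (i + 1) - γ i‖ = ‖u‖ / ν := by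
    intro i
    rw [hγdiff]
    rw [norm_smul, Real.norm_eq_abs]
    have : ((i : ℝ) + 1 - i) / ν = 1 / ν := by ring
    push_cast
    rw [this, abs_of_nonneg (by positivity)]
    ring
  have hγ0 : γ 0 = a := by simp [hγ]
  have hγn : γ n = b := by
    have hone : ((n : ℝ)) / ν = 1 := by
      rw [hν]
      exact div_self (by exact_mod_cast hn0.ne')
    simp only [hγ, hone, one_smul, hu]
    abel
  have hp0 : p 0 = y := by rw [hp]; simp [hγ0, hy]
  have hpn : p n = y := by rw [hp]; simp only [hγn]; exact hab.symm
  have hpstep : ∀ i < n, ‖p (i + 1) - p i‖ ≤ S / ν := by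
    intro i hi
    have h1 := hLip (γ (i + 1)) (hγmem (i + 1) (by omega)) (γ i) (hγmem i (by omega))
    rw [hγstep i] at h1
    calc ‖p (i + 1) - p i‖ ≤ M' * (‖u‖ / ν) := h1
      _ = S / ν := by rw [hS]; ring
  have hpbound : ∀ i ≤ n, ‖p i - y‖ ≤ S := by
    intro i hi
    rw [← hp0]
    have h1 := hLip (γ i) (hγmem i hi) (γ 0) (hγmem 0 (by omega))
    have h2 : ‖γ i - γ 0‖ ≤ ‖u‖ := by
      rw [hγdiff, norm_smul, Real.norm_eq_abs]
      push_cast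
      have h0 : ((i : ℝ) - 0) / ν = (i : ℝ) / ν := by ring
      rw [h0, abs_of_nonneg (by positivity)]
      have h1 : (i : ℝ) / ν ≤ 1 := by
        rw [div_le_one hν0, hν]
        exact_mod_cast hi
      nlinarith [norm_nonneg u]
    calc ‖p i - p 0‖ ≤ M' * ‖γ i - γ 0‖ := h1
      _ ≤ M' * ‖u‖ := by nlinarith
      _ = S := rfl
  -- the interpolated paths
  set Q : ℕ → ℕ → E := fun k i => y + ((k : ℝ) / ν) • (p i - y) with hQ
  have hQdiff : ∀ k i j, Q k i - Q k j = ((k : ℝ) / ν) • (p i - p j) := by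
    intro k i j
    simp only [hQ]
    rw [smul_sub, smul_sub, smul_sub]
    abel
  have hQ0 : ∀ k, Q k 0 = φ a := by
    intro k
    simp [hQ, hp0, hy]
  have hQn : ∀ k, Q k n = y := by
    intro k
    simp [hQ, hpn]
  have hQstep : ∀ k ≤ n, ∀ i < n, ‖Q k (i + 1) - Q k i‖ ≤ S / ν := by
    intro k hk i hi
    rw [hQdiff, norm_smul, Real.norm_eq_abs, abs_of_nonneg (by positivity)]
    have h1 : (k : ℝ) / ν ≤ 1 := by
      rw [div_le_one hν0]; exact_mod_cast Nat.cast_le.2 hk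
    have h2 := hpstep i hi
    have h3 : (0:ℝ) ≤ (k : ℝ) / ν := by positivity
    have h4 : (0:ℝ) ≤ S / ν := by positivity
    nlinarith [norm_nonneg (p (i+1) - p i)]
  have hQtot : ∀ k ≤ n, ∑ i ∈ Finset.range n, ‖Q k (i + 1) - Q k i‖ ≤ S := by
    intro k hk
    calc ∑ i ∈ Finset.range n, ‖Q k (i + 1) - Q k i‖
        ≤ ∑ _i ∈ Finset.range n, S / ν := by
          exact Finset.sum_le_sum fun i hi => hQstep k hk i (Finset.mem_range.1 hi)
      _ = n * (S / ν) := by rw [Finset.sum_const, Finset.card_range]; ring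
      _ = S := by rw [← hν]; field_simp
  have hQcross : ∀ k, ∀ i ≤ n, ‖Q k i - Q (k + 1) i‖ ≤ δ / 16 := by
    intro k i hi
    have h1 : Q k i - Q (k + 1) i = (((k : ℝ) - ((k : ℝ) + 1)) / ν) • (p i - y) := by
      simp only [hQ]
      rw [sub_div, sub_smul]
      push_cast
      abel
    rw [h1, norm_smul, Real.norm_eq_abs]
    have h2 : ((k : ℝ) - ((k : ℝ) + 1)) / ν = -(1 / ν) := by ring
    rw [h2, abs_neg, abs_of_nonneg (by positivity)]
    have h3 := hpbound i hi
    have h4 : 1 / ν * ‖p i - y‖ ≤ 1 / ν * S := by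
      apply mul_le_mul_of_nonneg_left h3 (by positivity)
    calc 1 / ν * ‖p i - y‖ ≤ 1 / ν * S := h4
      _ = S / ν := by ring
      _ ≤ δ / 16 := hSν
  have hε2 : (1:ℝ)/2 ≤ 1/2 := le_rfl
  have hSR : 2 * S ≤ R := le_of_eq hR.symm
  have hδ16 : δ / 16 ≤ (1 - 1/2) * δ := by linarith
  -- main claim by induction on k
  have claim : ∀ k, k ≤ n → ∀ z, ChainP φ a (Q k) n (1 - (1/2:ℝ))⁻¹ z → z n = a := by
    intro k
    induction k with
    | zero =>
      intro _ z hzc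
      have hQ0y : ∀ i, Q 0 i = y := by intro i; simp [hQ]
      have hconst : ChainP φ a (Q 0) n (1 - (1/2:ℝ))⁻¹ (fun _ => a) := by
        refine ⟨rfl, fun i hi => ⟨?_, ?_⟩⟩
        · rw [hQ0y]
        · simp only [sub_self, norm_zero]
          positivity
      have hcl := chain_close hG hδ (by norm_num) (by norm_num) hSR (hQ0 0) (hQ0 0)
        (fun i hi => le_trans (hQstep 0 (by omega) i hi) hSν)
        (fun i hi => le_trans (hQstep 0 (by omega) i hi) hSν)
        (hQtot 0 (by omega)) hzc hconst
        (fun i _ => by simp only [sub_self, norm_zero]; positivity)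
      have := hcl n le_rfl
      simp only [sub_self, norm_zero, mul_zero] at this
      have := norm_le_zero_iff.1 this
      exact sub_eq_zero.1 this
    | succ k ih =>
      intro hk z hzc
      obtain ⟨zk, hzk⟩ := chain_exists hG hδ (by norm_num) (by norm_num) hSR n (Q k)
        (hQ0 k)
        (fun i hi => le_trans (le_trans (hQstep k (by omega) i hi) hSν) hδ16)
        (hQtot k (by omega))
      have ha := ih (by omega) zk hzk
      have hcl := chain_close hG hδ (by norm_num) (by norm_num) hSR (hQ0 k) (hQ0 (k + 1))
        (fun i hi => le_trans (hQstep k (by omega) i hi) hSν)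
        (fun i hi => le_trans (hQstep (k + 1) (by omega) i hi) hSν)
        (hQtot k (by omega)) hzk hzc
        (fun i hi => le_trans (hQcross k i hi) (by linarith))
      have hend := hcl n le_rfl
      rw [hQn k, hQn (k + 1), sub_self, norm_zero, mul_zero] at hend
      have := norm_le_zero_iff.1 hend
      rw [← ha]
      exact (sub_eq_zero.1 this).symm
  -- the straight chain lifts Q n
  have hQnp : ∀ i, Q n i = p i := by
    intro i
    simp only [hQ, ← hν]
    rw [div_self hν0.ne', one_smul]
    abel
  have hwchain : ChainP φ a (Q n) n (1 - (1/2:ℝ))⁻¹ γ := by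
    refine ⟨hγ0, fun i hi => ⟨?_, ?_⟩⟩
    · rw [hQnp]
    · obtain ⟨hanti, _⟩ := hG (γ i) (hγmemR i (by omega))
      have h1 : γ (i + 1) ∈ closedBall (γ i) δ := by
        rw [mem_closedBall, dist_eq_norm, hγstep i]
        linarith
      have hd := hanti (γ (i + 1)) h1 (γ i) (mem_closedBall_self hδ.le)
      rw [hQnp, hQnp]
      have h2 : (1 - (1/2:ℝ))⁻¹ = 2 := by norm_num
      rw [h2]
      have : (1 - 1/2 : ℝ) * ‖γ (i+1) - γ i‖ ≤ ‖φ (γ (i+1)) - φ (γ i)‖ := hd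
      have hpp : ‖φ (γ (i+1)) - φ (γ i)‖ = ‖p (i+1) - p i‖ := rfl
      rw [hpp] at this
      linarith
  have := claim n le_rfl γ hwchain
  rw [hγn] at this
  exact this.symm

set_option maxHeartbeats 1000000 in
lemma phi_expansion (φ : E → E) (hφC : ContDiff ℝ 1 φ)
    (hD : ∀ x v, ‖v‖ ≤ ‖fderiv ℝ φ x v‖) :
    ∀ x x', ‖x - x'‖ ≤ ‖φ x - φ x'‖ := by
  intro x x'
  set v := φ x - φ x' with hv
  set T := ‖v‖ with hT
  have hT0 : 0 ≤ T := norm_nonneg _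
  suffices h : ∀ ε : ℝ, 0 < ε → ε ≤ 1 / 2 → (1 - ε) * ‖x - x'‖ ≤ T by
    by_contra hcon
    push_neg at hcon
    have hx0 : 0 < ‖x - x'‖ := lt_of_le_of_lt hT0 hcon
    set ε := min (1 / 2 : ℝ) ((‖x - x'‖ - T) / (2 * ‖x - x'‖)) with hε
    have hε0 : 0 < ε := lt_min (by norm_num) (div_pos (by linarith) (by positivity))
    have h1 := h ε hε0 (min_le_left _ _)
    have h2 : ε ≤ (‖x - x'‖ - T) / (2 * ‖x - x'‖) := min_le_right _ _
    rw [le_div_iff₀ (by positivity)] at h2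
    nlinarith
  intro ε hε hε2
  have h1ε : (0:ℝ) < 1 - ε := by linarith
  obtain ⟨δ, hδ, hGood⟩ := uniform_good φ hφC hD x' (2 * T) hε (by linarith)
  have hG : Good φ x' (2 * T) δ ε := hGood
  obtain ⟨n, hn0, hkey⟩ : ∃ n : ℕ, 0 < n ∧ T ≤ (n : ℝ) * ((1 - ε) * δ) := by
    obtain ⟨n, hn⟩ := exists_nat_ge (T / ((1 - ε) * δ))
    refine ⟨n + 1, Nat.succ_pos n, ?_⟩
    rw [div_le_iff₀ (by positivity)] at hn
    have hcn : (0:ℝ) ≤ (n : ℝ) := Nat.cast_nonneg n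
    push_cast
    nlinarith
  set ν := (n : ℝ) with hν
  have hν0 : 0 < ν := by rw [hν]; exact_mod_cast hn0
  set q : ℕ → E := fun i => φ x' + ((i : ℝ) / ν) • v with hq
  have hq0 : q 0 = φ x' := by simp [hq]
  have hqdiff : ∀ i j : ℕ, q i - q j = (((i : ℝ) - (j : ℝ)) / ν) • v := by
    intro i j
    simp only [hq]
    rw [sub_div, sub_smul]
    abel
  have hqstep : ∀ i : ℕ, ‖q (i + 1) - q i‖ = T / ν := by
    intro i
    rw [hqdiff, norm_smul, Real.norm_eq_abs]
    push_cast
    have h0 : ((i : ℝ) + 1 - i) / ν = 1 / ν := by ring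
    rw [h0, abs_of_nonneg (by positivity), ← hT]
    ring
  have hstep : ∀ i < n, ‖q (i + 1) - q i‖ ≤ (1 - ε) * δ := by
    intro i _
    rw [hqstep]
    rw [div_le_iff₀ hν0]
    nlinarith
  have htot : ∑ i ∈ Finset.range n, ‖q (i + 1) - q i‖ ≤ T := by
    calc ∑ i ∈ Finset.range n, ‖q (i + 1) - q i‖
        = ∑ _i ∈ Finset.range n, T / ν := by
          exact Finset.sum_congr rfl fun i _ => hqstep i
      _ = n * (T / ν) := by rw [Finset.sum_const, Finset.card_range]; ring
      _ ≤ T := le_of_eq (by rw [← hν, mul_comm, div_mul_cancel₀ _ hν0.ne'])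
  obtain ⟨z, hz⟩ := chain_exists hG hδ hε hε2 (le_refl (2 * T)) n q hq0 hstep htot
  have hqn : q n = φ x := by
    have hone : ((n : ℝ)) / ν = 1 := by
      rw [hν]
      exact div_self (by exact_mod_cast hn0.ne')
    simp only [hq, hone, one_smul, hv]
    abel
  have hzn : z n = x := by
    apply phi_injective φ hφC hD
    rw [chain_phi hz hq0 n le_rfl, hqn]
  have hsum : ‖x - x'‖ ≤ (1 - ε)⁻¹ * T := by
    have h1 : dist (z 0) (z n) ≤ ∑ j ∈ Finset.range n, dist (z j) (z (j + 1)) :=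
      dist_le_range_sum_dist z n
    have h2 : ∑ j ∈ Finset.range n, dist (z j) (z (j + 1))
        ≤ ∑ j ∈ Finset.range n, (1 - ε)⁻¹ * ‖q (j + 1) - q j‖ := by
      apply Finset.sum_le_sum
      intro j hj
      rw [dist_eq_norm, norm_sub_rev]
      exact (hz.2 j (Finset.mem_range.1 hj)).2
    have h3 : ∑ j ∈ Finset.range n, (1 - ε)⁻¹ * ‖q (j + 1) - q j‖ ≤ (1 - ε)⁻¹ * T := by
      rw [← Finset.mul_sum]
      apply mul_le_mul_of_nonneg_left htot (by positivity)
    have h4 : ‖x - x'‖ = dist (z 0) (z n) := by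
      rw [hz.1, hzn, dist_eq_norm, norm_sub_rev]
    linarith
  calc (1 - ε) * ‖x - x'‖ ≤ (1 - ε) * ((1 - ε)⁻¹ * T) :=
        mul_le_mul_of_nonneg_left hsum (by linarith)
    _ = T := by field_simp

end StrongDispersiveAux

/-- let φ(x) = x + ψ(x) where ψ is continuously differentiable, the
Jacobian of ψ has only nonnegative real eigenvalues, and J_φ(x)ᵀ J_φ(x) - I ⪰ 0 for all
x (equivalently ‖J_φ(x) v‖ ≥ ‖v‖ for all v). Then φ is an expansion:
‖φ(x) - φ(x')‖ ≥ ‖x - x'‖ for all x, x'. -/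
theorem stmt_16 {d : ℕ}
    (ψ φ : EuclideanSpace ℝ (Fin d) → EuclideanSpace ℝ (Fin d))
    (hψ : ContDiff ℝ 1 ψ) (hφ : φ = fun x => x + ψ x)
    (heig : ∀ x, ∀ lam ∈ spectrum ℝ (fderiv ℝ ψ x), 0 ≤ lam)
    (hpsd : ∀ x v, ‖v‖ ≤ ‖fderiv ℝ φ x v‖) :
    ∀ x x', ‖x - x'‖ ≤ ‖φ x - φ x'‖ := by
  have hφC : ContDiff ℝ 1 φ := by
    rw [hφ]
    exact contDiff_id.add hψ
  exact phi_expansion φ hφC hpsd
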